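/- Let H be a real Hilbert space, a a continuous coercive bilinear form (coercivity constant α), f ∈ H*, j : H → ℝ convex. If u₁ and u₂ both satisfy the variational inequality of the second kind a(uᵢ, v - uᵢ) + j(v) - j(uᵢ) ≥ ⟨f, v - uᵢ⟩ for all v ∈ H, then u₁ = u₂. -/

import Mathlib

theorem stmt_4 {H : Type*} [NormedAddCommGroup H] [InnerProductSpace ℝ H] [CompleteSpace H]
    (a : H → H → ℝ) (α C : ℝ) (hα : 0 < α)
    (hlin₁ : ∀ y, IsLinearMap ℝ (fun x => a x y))
    (hlin₂ : ∀ x, IsLinearMap ℝ (a x))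
    (hcoer : ∀ x, α * ‖x‖ ^ 2 ≤ a x x)
    (hbound : ∀ x y, |a x y| ≤ C * ‖x‖ * ‖y‖)
    (f : H →L[ℝ] ℝ)
    (j : H → ℝ) (hj : ConvexOn ℝ Set.univ j)
    (u₁ u₂ : H)
    (h₁ : ∀ v : H, f (v - u₁) ≤ a u₁ (v - u₁) + j v - j u₁)
    (h₂ : ∀ v : H, f (v - u₂) ≤ a u₂ (v - u₂) + j v - j u₂) :
    u₁ = u₂ := by
  set d := u₁ - u₂ with hd
  have key₁ := h₁ u₂
  have key₂ := h₂ u₁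
  have hsum : (0 : ℝ) ≤ a u₁ (u₂ - u₁) + a u₂ (u₁ - u₂) := by
    have hf : f (u₂ - u₁) + f (u₁ - u₂) = 0 := by
      simp [map_sub]
    nlinarith [key₁, key₂]
  have hswap : a u₁ (u₂ - u₁) + a u₂ (u₁ - u₂) = -(a d d) := by
    have e1 : a u₁ (u₂ - u₁) = -(a u₁ d) := by
      rw [hd, show u₂ - u₁ = -(u₁ - u₂) by abel, (hlin₂ u₁).map_neg]
    have e2 : a d d = a u₁ d - a u₂ d := by
      have := (hlin₁ d).map_sub u₁ u₂
      simpa [hd] using this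
    rw [e1, e2]; ring
  have hdd : a d d ≤ 0 := by linarith [hsum, hswap.symm.le]
  have hnorm : α * ‖d‖ ^ 2 ≤ 0 := le_trans (hcoer d) hdd
  have hsq : ‖d‖ ^ 2 ≤ 0 := (mul_le_mul_iff_of_pos_left hα).mp (by simpa using hnorm)
  have hsq0 : ‖d‖ ^ 2 = 0 := le_antisymm hsq (sq_nonneg _)
  have : ‖d‖ = 0 := by nlinarith [norm_nonneg d]
  have : d = 0 := norm_eq_zero.mp this
  rw [hd] at this
  exact sub_eq_zero.mp this
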